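/- Let θ ∈ ℂ*, p ∈ ℤ*, A = ℂ[x, y, y^{-1}]/(x² - θy^{2p} - 1), and D = x∂_y + pθy^{2p-1}∂_x. Then A has no nonzero proper D-invariant ideal; equivalently, the only ideals I of A with D(I) ⊆ I are 0 and A. -/

import Mathlib

/-- `ℂ[x, y, y⁻¹]`: polynomials in `x` over Laurent polynomials in `y`. -/
abbrev Rng : Type := Polynomial (LaurentPolynomial ℂ)

/-- The ideal generated by `x² - θy^{2p} - 1`. -/
noncomputable def relIdeal (θ : ℂ) (p : ℤ) : Ideal Rng :=
  Ideal.span {Polynomial.X ^ 2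
    - Polynomial.C (LaurentPolynomial.C θ * LaurentPolynomial.T (2 * p)) - 1}

/-- `A = ℂ[x, y, y⁻¹]/(x² - θy^{2p} - 1)`. -/
abbrev Aqt (θ : ℂ) (p : ℤ) : Type := Rng ⧸ relIdeal θ p

set_option maxHeartbeats 1000000

open Polynomial

namespace Stmt6Aux

/-- Key evaluation fact: a binomial `u X^m + v X^n` with `m ≠ n`, `u ≠ 0` cannot have a
common nonzero root with its "Euler derivative". -/
lemma binom_root {u v lam : ℂ} (hu : u ≠ 0) {m n : ℕ} (hmn : m ≠ n) (hlam : lam ≠ 0)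
    (h1 : u * lam ^ m + v * lam ^ n = 0)
    (h2 : u * m * lam ^ m + v * n * lam ^ n = 0) : False := by
  have hv : v * lam ^ n = -(u * lam ^ m) := by linear_combination h1
  rw [mul_assoc, mul_comm ((m : ℂ)) _, ← mul_assoc] at h2
  have h3 : v * (n:ℂ) * lam ^ n = v * lam ^ n * n := by ring
  rw [h3, hv] at h2
  have : u * lam ^ m * ((m : ℂ) - n) = 0 := by linear_combination h2
  rcases mul_eq_zero.1 this with h | h
  · exact (mul_ne_zero hu (pow_ne_zero _ hlam)) h
  · have : (m : ℂ) = n := by linear_combination h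
    exact hmn (Nat.cast_injective this)

/-- Eval of derivative of a binomial, multiplied by `lam`. -/
lemma eval_derivative_binom (u v lam : ℂ) (m n : ℕ) :
    lam * eval lam (derivative (C u * X ^ m + C v * X ^ n)) =
      u * m * lam ^ m + v * n * lam ^ n := by
  simp only [derivative_add, derivative_C_mul, derivative_X_pow]
  cases m with
  | zero => cases n with
    | zero => simp
    | succ n => simp; ring
  | succ m => cases n with
    | zero => simp; ring
    | succ n => simp; ring

lemma binom_rootMultiplicity {u v : ℂ} (hu : u ≠ 0) {m n : ℕ} (hmn : m ≠ n) {lam : ℂ}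
    (hlam : lam ≠ 0) (hroot : (C u * X ^ m + C v * X ^ n).IsRoot lam) :
    rootMultiplicity lam (C u * X ^ m + C v * X ^ n) = 1 := by
  set c : ℂ[X] := C u * X ^ m + C v * X ^ n with hc
  have hc0 : c ≠ 0 := by
    intro h
    have h1 : u * lam ^ m + v * lam ^ n = 0 := by
      have := hroot; simpa [hc, IsRoot] using this
    have h2 : eval lam (derivative c) = 0 := by rw [h]; simp
    have h2' : u * m * lam ^ m + v * n * lam ^ n = 0 := by
      rw [← eval_derivative_binom u v lam m n, ← hc, h2, mul_zero]
    exact binom_root hu hmn hlam h1 h2'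
  have h1 : u * lam ^ m + v * lam ^ n = 0 := by simpa [hc, IsRoot] using hroot
  have hpos : 0 < rootMultiplicity lam c := (rootMultiplicity_pos hc0).2 hroot
  by_contra hne
  have h2 : 1 ≤ rootMultiplicity lam (derivative c) := by
    rw [derivative_rootMultiplicity_of_root hroot]
    omega
  have hd0 : derivative c ≠ 0 := by
    intro h; rw [h, rootMultiplicity_zero] at h2; omega
  have hroot' : (derivative c).IsRoot lam := (rootMultiplicity_pos hd0).1 (by omega)
  have h2' : u * m * lam ^ m + v * n * lam ^ n = 0 := by
    rw [← eval_derivative_binom u v lam m n, ← hc, hroot', mul_zero]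
  exact binom_root hu hmn hlam h1 h2'


/-- `a² · Xˢ = b² · (u Xᴺ + v) · Xʳ` is impossible for `b ≠ 0`. -/
lemma not_square {u v : ℂ} (hu : u ≠ 0) (hv : v ≠ 0) {N : ℕ} (hN : N ≠ 0)
    {a b : ℂ[X]} (hb : b ≠ 0) (s r : ℕ)
    (h : a ^ 2 * X ^ s = b ^ 2 * (C u * X ^ N + C v * X ^ 0) * X ^ r) : False := by
  set c : ℂ[X] := C u * X ^ N + C v * X ^ 0 with hc
  have hc0 : c ≠ 0 := by
    intro h0
    have hcf : c.coeff N = u := by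
      simp [hc, coeff_X_pow, coeff_C, hN]
    rw [h0] at hcf; simp at hcf; exact hu hcf.symm
  have hdegN : c.degree = (N : WithBot ℕ) := by
    rw [hc, degree_add_eq_left_of_degree_lt, degree_C_mul_X_pow N hu]
    rw [degree_C_mul_X_pow N hu]
    calc (C v * X ^ 0).degree ≤ 0 := by simpa using degree_C_le
    _ < (N : WithBot ℕ) := by exact_mod_cast Nat.pos_of_ne_zero hN
  have hdeg : 0 < c.degree := by
    rw [hdegN]; exact_mod_cast Nat.pos_of_ne_zero hN
  obtain ⟨lam, hroot⟩ := Complex.exists_root hdeg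
  have hlam : lam ≠ 0 := by
    intro h0
    have := hroot
    rw [h0] at this
    simp [hc, IsRoot, zero_pow hN] at this
    exact hv this
  have ha : a ≠ 0 := by
    rintro rfl
    have : b ^ 2 * c * X ^ r = 0 := by rw [← h]; ring
    rcases mul_eq_zero.1 this with h' | h'
    · rcases mul_eq_zero.1 h' with h'' | h''
      · exact hb (pow_eq_zero_iff two_ne_zero |>.1 h'')
      · exact hc0 h''
    · exact X_ne_zero (pow_eq_zero_iff' |>.1 h').1
  have hXs : (X : ℂ[X]) ^ s ≠ 0 := pow_ne_zero _ X_ne_zero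
  have hXr : (X : ℂ[X]) ^ r ≠ 0 := pow_ne_zero _ X_ne_zero
  have hA : a ^ 2 * X ^ s ≠ 0 := mul_ne_zero (pow_ne_zero _ ha) hXs
  have hB : b ^ 2 * c ≠ 0 := mul_ne_zero (pow_ne_zero _ hb) hc0
  have hrmX : ∀ t : ℕ, rootMultiplicity lam ((X : ℂ[X]) ^ t) = 0 := by
    intro t
    exact rootMultiplicity_eq_zero (by simp [IsRoot, hlam])
  have h1 : rootMultiplicity lam (a ^ 2 * X ^ s)
      = 2 * rootMultiplicity lam a := by
    rw [rootMultiplicity_mul hA, hrmX, sq, rootMultiplicity_mul (mul_ne_zero ha ha)]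
    ring
  have h2 : rootMultiplicity lam (b ^ 2 * c * X ^ r)
      = 2 * rootMultiplicity lam b + 1 := by
    rw [rootMultiplicity_mul (mul_ne_zero hB hXr), hrmX,
      rootMultiplicity_mul hB, sq, rootMultiplicity_mul (mul_ne_zero hb hb),
      binom_rootMultiplicity hu hN hlam hroot]
    ring
  rw [h, h2] at h1
  omega


/-- The heart of the argument: no nonzero root for a generator satisfying the
two divisibility relations. -/
lemma no_nonzero_root {θ P : ℂ} (hθ : θ ≠ 0) (hP : P ≠ 0) {a b : ℕ}
    (hab : (a : ℂ) + 1 - (b : ℂ) = 2 * P) {g : ℂ[X]} (hg0 : g ≠ 0)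
    (hdvd1 : g ∣ (C θ * X ^ (a+1) + C 1 * X ^ b) * derivative g)
    (hdvd2 : g ∣ (C θ * X ^ (a+1) + C 1 * X ^ b) * derivative (derivative g)
      + C (P * θ) * X ^ a * derivative g)
    {lam : ℂ} (hlam : lam ≠ 0) (hroot : g.IsRoot lam) : False := by
  set c : ℂ[X] := C θ * X ^ (a+1) + C 1 * X ^ b with hcdef
  have hab' : a + 1 ≠ b := by
    intro h
    rw [← h] at hab
    push_cast at hab
    have : P = 0 := by linear_combination -hab/2
    exact hP this
  set s : ℂ[X] := X - C lam with hsdef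
  have hs0 : s ≠ 0 := X_sub_C_ne_zero lam
  have hsm : s.Monic := monic_X_sub_C lam
  -- decompose g
  obtain ⟨k', hk'⟩ : ∃ k', rootMultiplicity lam g = k' + 1 := by
    have := (rootMultiplicity_pos hg0).2 hroot
    exact ⟨rootMultiplicity lam g - 1, by omega⟩
  set v : ℂ[X] := g /ₘ s ^ (k' + 1) with hvdef
  have hgv : s ^ (k' + 1) * v = g := by
    rw [hvdef, hsdef, ← hk']; exact pow_mul_divByMonic_rootMultiplicity_eq g lam
  have hvlam : eval lam v ≠ 0 := by
    rw [hvdef, hsdef, ← hk']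
    exact eval_divByMonic_pow_rootMultiplicity_ne_zero lam hg0
  have hv0 : v ≠ 0 := fun h => hvlam (by rw [h]; simp)
  -- derivative of g
  set w : ℂ[X] := C ((k' : ℂ) + 1) * v + s * derivative v with hwdef
  have hg' : derivative g = s ^ k' * w := by
    rw [← hgv, derivative_mul, derivative_pow]
    rw [hwdef, hsdef]
    simp only [derivative_X_sub_C]
    push_cast
    ring
  have hwlam : eval lam w = ((k' : ℂ) + 1) * eval lam v := by
    rw [hwdef]; simp [hsdef]
  have hwlam0 : eval lam w ≠ 0 := by
    rw [hwlam]
    exact mul_ne_zero (Nat.cast_add_one_ne_zero k') hvlam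
  have hw0 : w ≠ 0 := fun h => hwlam0 (by rw [h]; simp)
  have hg'0 : derivative g ≠ 0 := by
    rw [hg']; exact mul_ne_zero (pow_ne_zero _ hs0) hw0
  have hrmg' : rootMultiplicity lam (derivative g) = k' := by
    rw [hg', rootMultiplicity_mul (mul_ne_zero (pow_ne_zero _ hs0) hw0), hsdef,
      rootMultiplicity_X_sub_C_pow, rootMultiplicity_eq_zero (by exact hwlam0)]
    omega
  -- c has lam as simple root
  obtain ⟨q, hq⟩ := hdvd1
  have hc0 : c ≠ 0 := by
    intro h0
    have hcf : c.coeff (a+1) = θ := by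
      simp [hcdef, coeff_X_pow, coeff_C, hab']
    rw [h0] at hcf; simp at hcf; exact hθ hcf.symm
  have hcg'0 : c * derivative g ≠ 0 := mul_ne_zero hc0 hg'0
  have hdvdk : s ^ (k' + 1) ∣ c * derivative g := by
    refine dvd_trans ?_ (hq ▸ dvd_mul_right g q)
    rw [← hgv]; exact dvd_mul_right _ _
  have hrmc_pos : 1 ≤ rootMultiplicity lam c := by
    have hle : k' + 1 ≤ rootMultiplicity lam (c * derivative g) := by
      rw [le_rootMultiplicity_iff hcg'0]; exact hdvdk
    rw [rootMultiplicity_mul hcg'0, hrmg'] at hle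
    omega
  have hcroot : c.IsRoot lam := by
    by_contra hcon
    rw [rootMultiplicity_eq_zero hcon] at hrmc_pos; omega
  have hrmc : rootMultiplicity lam c = 1 :=
    binom_rootMultiplicity hθ hab' hlam hcroot
  -- factor c = s * u
  set u : ℂ[X] := c /ₘ s with hudef
  have hsu : s * u = c := by
    rw [hudef, hsdef]; exact (mul_divByMonic_eq_iff_isRoot).2 hcroot
  have hulam : eval lam u ≠ 0 := by
    intro h0
    have : s ∣ u := by rw [hsdef]; exact dvd_iff_isRoot.2 h0
    obtain ⟨u2, hu2⟩ := this
    have : s ^ 2 ∣ c := ⟨u2, by rw [← hsu, hu2]; ring⟩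
    have h2 : 2 ≤ rootMultiplicity lam c := by
      rw [le_rootMultiplicity_iff hc0]; rw [hsdef] at this; exact this
    omega
  -- cancel s^(k'+1) in hq : c * g' = g * q
  have hkey : u * w = v * q := by
    have h1 : s ^ (k' + 1) * (u * w) = s ^ (k' + 1) * (v * q) := by
      calc s ^ (k' + 1) * (u * w) = (s * u) * (s ^ k' * w) := by ring
      _ = c * derivative g := by rw [hsu, hg']
      _ = g * q := hq
      _ = s ^ (k' + 1) * (v * q) := by rw [← hgv]; ring
    exact mul_left_cancel₀ (pow_ne_zero _ hs0) h1
  have hqlam : eval lam q = ((k' : ℂ) + 1) * eval lam u := by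
    have h6 := congrArg (eval lam) hkey
    simp only [eval_mul] at h6
    rw [hwlam] at h6
    refine mul_left_cancel₀ hvlam ?_
    linear_combination -h6
  -- second relation
  set r : ℂ[X] := q - derivative c + C (P * θ) * X ^ a with hrdef
  obtain ⟨z, hz⟩ := hdvd2
  have hD : derivative c * derivative g + c * derivative (derivative g)
      = derivative g * q + g * derivative q := by
    have := congrArg derivative hq
    rwa [derivative_mul, derivative_mul] at this
  have hgr : g ∣ derivative g * r := by
    refine ⟨z - derivative q, ?_⟩
    rw [hrdef]
    linear_combination hz - hD
  have hrlam : eval lam r = 0 := by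
    rcases eq_or_ne r 0 with h0 | h0
    · rw [h0]; simp
    · have hgr0 : derivative g * r ≠ 0 := mul_ne_zero hg'0 h0
      have hle : k' + 1 ≤ rootMultiplicity lam (derivative g * r) := by
        rw [le_rootMultiplicity_iff hgr0]
        calc s ^ (k'+1) ∣ g := by rw [← hgv]; exact dvd_mul_right _ _
        _ ∣ derivative g * r := hgr
      rw [rootMultiplicity_mul hgr0, hrmg'] at hle
      have : 1 ≤ rootMultiplicity lam r := by omega
      have : r.IsRoot lam := by
        by_contra hcon
        rw [rootMultiplicity_eq_zero hcon] at this; omega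
      exact this
  -- evaluate everything
  have hclam' : eval lam (derivative c) = eval lam u := by
    have h7 : derivative c = u + s * derivative u := by
      rw [← hsu, derivative_mul, hsdef, derivative_X_sub_C, one_mul]
    rw [h7]
    simp [hsdef]
  have heq1 : ((k' : ℂ)) * eval lam u = - (P * θ * lam ^ a) := by
    have h0 := hrlam
    rw [hrdef] at h0
    simp only [eval_add, eval_sub, eval_mul, eval_C, eval_pow, eval_X] at h0
    rw [hqlam, hclam'] at h0
    linear_combination h0
  -- compute lam * eval lam u via c
  have hcroot' : θ * lam ^ (a+1) + lam ^ b = 0 := by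
    have := hcroot
    simp [hcdef, IsRoot] at this
    linear_combination this
  have hluval : lam * eval lam u = θ * ((a:ℂ) + 1) * lam ^ (a+1) + (b:ℂ) * lam ^ b := by
    rw [← hclam']
    have := eval_derivative_binom θ 1 lam (a+1) b
    rw [this]; push_cast; ring
  have heq2 : lam * eval lam u = 2 * P * θ * lam ^ (a + 1) := by
    rw [hluval]
    have hb : lam ^ b = - (θ * lam ^ (a+1)) := by linear_combination hcroot'
    rw [hb]
    linear_combination (θ * lam ^ (a+1)) * hab
  -- final contradiction
  rw [pow_succ] at heq2
  have hfin : P * θ * (lam ^ a * lam) * (2 * (k' : ℂ) + 1) = 0 := by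
    linear_combination lam * heq1 - (k' : ℂ) * heq2
  have h20 : (2 * (k' : ℂ) + 1) = 0 := by
    by_contra hcon
    exact mul_ne_zero (mul_ne_zero (mul_ne_zero hP hθ)
      (mul_ne_zero (pow_ne_zero a hlam) hlam)) hcon hfin
  have h21 : ((2 * k' + 1 : ℕ) : ℂ) = 0 := by push_cast; linear_combination h20
  have := Nat.cast_eq_zero.1 h21
  omega


open LaurentPolynomial

noncomputable section
variable (θ : ℂ) (p : ℤ)

/-- The Laurent-polynomial constant `θ y^{2p} + 1`. -/
def cL : LaurentPolynomial ℂ := LaurentPolynomial.C θ * T (2*p) + 1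

/-- the relation polynomial -/
def relP : Rng := Polynomial.X ^ 2 - Polynomial.C (cL θ p)

lemma relP_monic : (relP θ p).Monic := monic_X_pow_sub_C _ (by norm_num)

lemma relIdeal_eq : relIdeal θ p = Ideal.span {relP θ p} := by
  have : Polynomial.X ^ 2
      - Polynomial.C (LaurentPolynomial.C θ * LaurentPolynomial.T (2 * p)) - 1
      = relP θ p := by
    simp only [relP, cL, map_add, map_one]
    ring
  rw [relIdeal, this]

/-- quotient map on Laurent constants -/
def ψ : LaurentPolynomial ℂ →+* Aqt θ p :=
  (Ideal.Quotient.mk (relIdeal θ p)).comp Polynomial.C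

/-- quotient map on polynomials in y -/
def Φ : ℂ[X] →+* Aqt θ p := (ψ θ p).comp Polynomial.toLaurent

lemma mk_eq_zero_of_degree_lt (q : Rng) (hq : q.degree < 2)
    (h : Ideal.Quotient.mk (relIdeal θ p) q = 0) : q = 0 := by
  rw [Ideal.Quotient.eq_zero_iff_mem, relIdeal_eq, Ideal.mem_span_singleton] at h
  by_contra hq0
  have hdeg := degree_le_of_dvd h hq0
  rw [relP, degree_X_pow_sub_C (by norm_num)] at hdeg
  exact absurd (lt_of_le_of_lt hdeg hq) (lt_irrefl _)

/-- x -/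
def xx : Aqt θ p := Ideal.Quotient.mk (relIdeal θ p) Polynomial.X

/-- powers of y -/
def t (n : ℤ) : Aqt θ p := ψ θ p (T n)

lemma t_mul (m n : ℤ) : t θ p m * t θ p n = t θ p (m + n) := by
  rw [t, t, t, ← map_mul, T_add]

lemma t_zero : t θ p 0 = 1 := by rw [t, T_zero, map_one]

lemma isUnit_t (n : ℤ) : IsUnit (t θ p n) :=
  ⟨⟨t θ p n, t θ p (-n), by rw [t_mul, add_neg_cancel, t_zero],
    by rw [t_mul, neg_add_cancel, t_zero]⟩, rfl⟩

lemma xx_sq : xx θ p * xx θ p = ψ θ p (cL θ p) := by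
  have h : Ideal.Quotient.mk (relIdeal θ p) (relP θ p) = 0 := by
    rw [Ideal.Quotient.eq_zero_iff_mem, relIdeal_eq]
    exact Ideal.subset_span rfl
  have : Ideal.Quotient.mk (relIdeal θ p) ((Polynomial.X : Rng) ^ 2)
      - Ideal.Quotient.mk (relIdeal θ p) (Polynomial.C (cL θ p)) = 0 := by
    rw [← map_sub, ← relP]; exact h
  have h2 := sub_eq_zero.mp this
  calc xx θ p * xx θ p = Ideal.Quotient.mk (relIdeal θ p) ((Polynomial.X : Rng) ^ 2) := by
        rw [xx, ← map_mul, sq]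
  _ = ψ θ p (cL θ p) := h2

lemma psi_C (c : ℂ) : ψ θ p (LaurentPolynomial.C c) = (algebraMap ℂ (Aqt θ p) : ℂ →+* Aqt θ p) c := rfl

/-- scalars in the quotient -/
def aC (c : ℂ) : Aqt θ p := (algebraMap ℂ (Aqt θ p) : ℂ →+* Aqt θ p) c

lemma t_mul' (m n k : ℤ) (h : m + n = k) : t θ p m * t θ p n = t θ p k := by
  rw [t_mul, h]

variable {θ p} (D : Derivation ℂ (Aqt θ p) (Aqt θ p))

lemma D_aC (c : ℂ) : D (aC θ p c) = 0 := Derivation.map_algebraMap D c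

lemma D_t_neg_one (hDy : D (t θ p 1) = xx θ p) :
    D (t θ p (-1)) = -(t θ p (-2) * xx θ p) := by
  have h0 : t θ p 1 * t θ p (-1) = 1 := t_mul' θ p _ _ _ (by norm_num) |>.trans (t_zero θ p)
  have h1 : D (t θ p 1 * t θ p (-1)) = 0 := by rw [h0]; exact D.map_one_eq_zero
  rw [D.leibniz, hDy, smul_eq_mul, smul_eq_mul] at h1
  have e1 : t θ p (-1) * t θ p 1 = 1 := t_mul' θ p _ _ _ (by norm_num) |>.trans (t_zero θ p)
  have e2 : t θ p (-1) * t θ p (-1) = t θ p (-2) := t_mul' θ p _ _ _ (by norm_num)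
  linear_combination (t θ p (-1)) * h1 - D (t θ p (-1)) * e1 - xx θ p * e2

lemma D_t (hDy : D (t θ p 1) = xx θ p) (n : ℤ) :
    D (t θ p n) = aC θ p (n : ℂ) * (t θ p (n-1) * xx θ p) := by
  induction n using Int.induction_on with
  | zero =>
      rw [t_zero]
      have h0 : aC θ p ((0:ℤ) : ℂ) = 0 := by simp [aC]
      rw [h0, D.map_one_eq_zero]
      ring
  | succ i ih =>
      have h1 : t θ p (i:ℤ) * t θ p 1 = t θ p ((i:ℤ)+1) := t_mul' θ p _ _ _ rfl
      have h2 : D (t θ p ((i:ℤ)+1)) = t θ p (i:ℤ) • D (t θ p 1) + t θ p 1 • D (t θ p (i:ℤ)) := by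
        rw [← h1]; exact D.leibniz _ _
      rw [smul_eq_mul, smul_eq_mul, hDy, ih] at h2
      have e1 : t θ p 1 * t θ p ((i:ℤ)-1) = t θ p (i:ℤ) := t_mul' θ p _ _ _ (by ring)
      have e2 : aC θ p (((i:ℤ)+1 : ℤ) : ℂ) = aC θ p ((i:ℤ) : ℂ) + 1 := by
        rw [aC, aC]; push_cast; ring
      have e3 : ((i:ℤ)+1-1 : ℤ) = (i:ℤ) := by ring
      rw [h2, e3, e2]
      linear_combination (aC θ p ((i:ℤ):ℂ) * xx θ p) * e1
  | pred i ih =>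
      have h1 : t θ p (-(i:ℤ)) * t θ p (-1) = t θ p (-(i:ℤ)-1) := t_mul' θ p _ _ _ (by ring)
      have h2 : D (t θ p (-(i:ℤ)-1))
          = t θ p (-(i:ℤ)) • D (t θ p (-1)) + t θ p (-1) • D (t θ p (-(i:ℤ))) := by
        rw [← h1]; exact D.leibniz _ _
      rw [smul_eq_mul, smul_eq_mul, D_t_neg_one D hDy, ih] at h2
      have e1 : t θ p (-1) * t θ p (-(i:ℤ)-1) = t θ p (-(i:ℤ)-2) := t_mul' θ p _ _ _ (by ring)
      have e0 : t θ p (-(i:ℤ)) * t θ p (-2) = t θ p (-(i:ℤ)-2) := t_mul' θ p _ _ _ (by ring)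
      have e2 : aC θ p ((-(i:ℤ)-1 : ℤ) : ℂ) = aC θ p ((-(i:ℤ) : ℤ) : ℂ) - 1 := by
        rw [aC, aC]; push_cast; ring
      have e3 : (-(i:ℤ)-1-1 : ℤ) = -(i:ℤ)-2 := by ring
      rw [h2, e3, e2]
      linear_combination (aC θ p ((-(i:ℤ):ℤ):ℂ) * xx θ p) * e1 - xx θ p * e0

lemma D_Phi (hDy : D (t θ p 1) = xx θ p) (f : ℂ[X]) :
    D (Φ θ p f) = Φ θ p (derivative f) * xx θ p := by
  induction f using Polynomial.induction_on' with
  | add f g hf hg =>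
      rw [derivative_add, map_add, map_add, map_add]
      linear_combination hf + hg
  | monomial n cc =>
      have hmono : ∀ m : ℕ, ∀ d : ℂ, Φ θ p (Polynomial.monomial m d)
          = aC θ p d * t θ p m := by
        intro m d
        rw [Φ, RingHom.comp_apply, Polynomial.toLaurent_C_mul_T, map_mul]
        rw [show (ψ θ p) (LaurentPolynomial.C d) = aC θ p d from rfl, t]
      cases n with
      | zero =>
          have e0 : (Polynomial.monomial 0 cc) = Polynomial.C cc := by simp
          have hC : Φ θ p (Polynomial.C cc) = aC θ p cc := by
            rw [Φ, RingHom.comp_apply, Polynomial.toLaurent_C]; rfl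
          rw [e0, hC, D_aC, derivative_C, map_zero]
          ring
      | succ j =>
          have h2 : D (aC θ p cc * t θ p (j+1 : ℕ))
              = aC θ p cc • D (t θ p (j+1 : ℕ)) + t θ p (j+1 : ℕ) • D (aC θ p cc) :=
            D.leibniz _ _
          rw [smul_eq_mul, smul_eq_mul, D_aC, D_t D hDy] at h2
          rw [hmono, derivative_monomial, hmono, h2]
          have e1 : ((j + 1 - 1 : ℕ) : ℤ) = (((j:ℕ)+1 : ℕ) : ℤ) - 1 := by push_cast; ring
          rw [e1]
          have e2 : aC θ p (cc * ((j:ℕ)+1 : ℕ)) = aC θ p cc * aC θ p ((((j:ℕ)+1 : ℕ) : ℤ) : ℂ) := by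
            rw [aC, aC, aC, ← map_mul]
            push_cast
            ring_nf
          rw [e2]
          ring

/-- exponent `max(0, 2p-1)` -/
def Ae (p : ℤ) : ℕ := (2*p-1).toNat
/-- exponent `max(0, 1-2p)` -/
def Be (p : ℤ) : ℕ := (1-2*p).toNat

/-- `y^{Be}` times the relation binomial, as a polynomial. -/
def c1 (θ : ℂ) (p : ℤ) : ℂ[X] :=
  Polynomial.C θ * Polynomial.X ^ (Ae p + 1) + Polynomial.C 1 * Polynomial.X ^ (Be p)

/-- `D x` as a Laurent constant. -/
def dxL (θ : ℂ) (p : ℤ) : LaurentPolynomial ℂ :=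
  LaurentPolynomial.C ((p:ℂ)*θ) * T (2*p-1)

lemma TB_dx (θ : ℂ) (p : ℤ) : T ((Be p : ℤ)) * dxL θ p
    = Polynomial.toLaurent (Polynomial.C ((p:ℂ)*θ) * Polynomial.X ^ (Ae p)) := by
  rw [Polynomial.toLaurent_C_mul_X_pow, dxL]
  have h : T ((Be p : ℤ)) * (LaurentPolynomial.C ((p:ℂ)*θ) * T (2*p-1))
      = LaurentPolynomial.C ((p:ℂ)*θ) * (T ((Be p : ℤ)) * T (2*p-1)) := by ring
  rw [h, ← T_add]
  congr 2
  unfold Ae Be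
  omega

lemma TB_cL (θ : ℂ) (p : ℤ) : T ((Be p : ℤ)) * cL θ p
    = Polynomial.toLaurent (c1 θ p) := by
  rw [c1, map_add, Polynomial.toLaurent_C_mul_X_pow, Polynomial.toLaurent_C_mul_X_pow, cL,
    mul_add, mul_one]
  have h1 : T ((Be p:ℤ)) * (LaurentPolynomial.C θ * T (2*p))
      = LaurentPolynomial.C θ * T (((Ae p + 1 : ℕ) : ℤ)) := by
    have h : T ((Be p:ℤ)) * (LaurentPolynomial.C θ * T (2*p))
        = LaurentPolynomial.C θ * (T ((Be p:ℤ)) * T (2*p)) := by ring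
    rw [h, ← T_add]
    congr 2
    unfold Ae Be
    omega
  rw [h1, map_one, one_mul]

lemma closure1 (hDy : D (t θ p 1) = xx θ p) (hDx : D (xx θ p) = ψ θ p (dxL θ p))
    {I : Ideal (Aqt θ p)} (hI : ∀ a ∈ I, D a ∈ I) {f : ℂ[X]} (hf : Φ θ p f ∈ I) :
    Φ θ p (Polynomial.C ((p:ℂ)*θ) * Polynomial.X ^ (Ae p) * f + c1 θ p * derivative f) ∈ I := by
  have h1 : xx θ p * Φ θ p f ∈ I := I.mul_mem_left _ hf
  have h2 : D (xx θ p * Φ θ p f) ∈ I := hI _ h1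
  have h3 : D (xx θ p * Φ θ p f)
      = xx θ p * (Φ θ p (derivative f) * xx θ p) + Φ θ p f * ψ θ p (dxL θ p) := by
    rw [D.leibniz, smul_eq_mul, smul_eq_mul, D_Phi D hDy, hDx]
  have e1 : t θ p ((Be p : ℤ)) * ψ θ p (cL θ p) = Φ θ p (c1 θ p) := by
    rw [t, ← map_mul, TB_cL]; rfl
  have e2 : t θ p ((Be p : ℤ)) * ψ θ p (dxL θ p)
      = Φ θ p (Polynomial.C ((p:ℂ)*θ) * Polynomial.X ^ (Ae p)) := by
    rw [t, ← map_mul, TB_dx]; rfl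
  have hxxs := xx_sq θ p
  have key : Φ θ p (Polynomial.C ((p:ℂ)*θ) * Polynomial.X ^ (Ae p) * f + c1 θ p * derivative f)
      = t θ p ((Be p : ℤ)) * D (xx θ p * Φ θ p f) := by
    rw [h3]
    simp only [map_add, map_mul] at e2 ⊢
    linear_combination -((t θ p ((Be p:ℤ)) * Φ θ p (derivative f)) * hxxs
      + Φ θ p (derivative f) * e1 + Φ θ p f * e2)
  rw [key]
  exact I.mul_mem_left _ h2

lemma closure2 (hDy : D (t θ p 1) = xx θ p) (hDx : D (xx θ p) = ψ θ p (dxL θ p))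
    {I : Ideal (Aqt θ p)} (hI : ∀ a ∈ I, D a ∈ I) {f : ℂ[X]} (hf : Φ θ p f ∈ I) :
    Φ θ p (c1 θ p * derivative (derivative f)
      + Polynomial.C ((p:ℂ)*θ) * Polynomial.X ^ (Ae p) * derivative f) ∈ I := by
  have h1 : Φ θ p (derivative f) * xx θ p ∈ I := by
    rw [← D_Phi D hDy]; exact hI _ hf
  have h2 : D (Φ θ p (derivative f) * xx θ p) ∈ I := hI _ h1
  have h3 : D (Φ θ p (derivative f) * xx θ p)
      = Φ θ p (derivative f) * ψ θ p (dxL θ p)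
        + xx θ p * (Φ θ p (derivative (derivative f)) * xx θ p) := by
    rw [D.leibniz, smul_eq_mul, smul_eq_mul, D_Phi D hDy, hDx]
  have e1 : t θ p ((Be p : ℤ)) * ψ θ p (cL θ p) = Φ θ p (c1 θ p) := by
    rw [t, ← map_mul, TB_cL]; rfl
  have e2 : t θ p ((Be p : ℤ)) * ψ θ p (dxL θ p)
      = Φ θ p (Polynomial.C ((p:ℂ)*θ) * Polynomial.X ^ (Ae p)) := by
    rw [t, ← map_mul, TB_dx]; rfl
  have hxxs := xx_sq θ p
  have key : Φ θ p (c1 θ p * derivative (derivative f)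
        + Polynomial.C ((p:ℂ)*θ) * Polynomial.X ^ (Ae p) * derivative f)
      = t θ p ((Be p : ℤ)) * D (Φ θ p (derivative f) * xx θ p) := by
    rw [h3]
    simp only [map_add, map_mul] at e2 ⊢
    linear_combination -((t θ p ((Be p:ℤ)) * Φ θ p (derivative (derivative f))) * hxxs
      + Φ θ p (derivative (derivative f)) * e1 + Φ θ p (derivative f) * e2)
  rw [key]
  exact I.mul_mem_left _ h2

lemma cL_clear (hθ : θ ≠ 0) (hp : p ≠ 0) :
    ∃ (E N : ℕ) (u v : ℂ), u ≠ 0 ∧ v ≠ 0 ∧ N ≠ 0 ∧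
      cL θ p * T (E : ℤ) = Polynomial.toLaurent
        (Polynomial.C u * Polynomial.X ^ N + Polynomial.C v * Polynomial.X ^ 0) := by
  rcases hp.lt_or_gt with hneg | hpos
  · refine ⟨(-2*p).toNat, (-2*p).toNat, 1, θ, one_ne_zero, hθ, by omega, ?_⟩
    have h2 : LaurentPolynomial.C θ * T (2*p) * T (((-2*p).toNat : ℕ) : ℤ)
        = LaurentPolynomial.C θ := by
      rw [mul_assoc, ← T_add]
      have he : (2*p + (((-2*p).toNat : ℕ) : ℤ)) = 0 := by omega
      rw [he, T_zero, mul_one]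
    rw [cL, add_mul, one_mul, h2, map_add, Polynomial.toLaurent_C_mul_X_pow,
      Polynomial.toLaurent_C_mul_X_pow, map_one, one_mul]
    rw [Nat.cast_zero, T_zero, mul_one]
    exact add_comm _ _
  · refine ⟨0, (2*p).toNat, θ, 1, hθ, one_ne_zero, by omega, ?_⟩
    have hN : ((((2*p).toNat : ℕ)) : ℤ) = 2*p := by omega
    rw [map_add, Polynomial.toLaurent_C_mul_X_pow, Polynomial.toLaurent_C_mul_X_pow, hN,
      map_one, one_mul, Nat.cast_zero, T_zero, cL]
    ring

lemma unit_cancel {c : LaurentPolynomial ℂ} {k : ℤ} (h : c * T k = 0) : c = 0 := by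
  have h1 : c * T k * T (-k) = 0 := by rw [h, zero_mul]
  rwa [mul_assoc, ← T_add, add_neg_cancel, T_zero, mul_one] at h1

lemma not_square_laurent (hθ : θ ≠ 0) (hp : p ≠ 0) {a b : LaurentPolynomial ℂ}
    (h : a ^ 2 = b ^ 2 * cL θ p) : a = 0 ∧ b = 0 := by
  obtain ⟨E, N, u, v, hu, hv, hN, hc⟩ := cL_clear hθ hp
  obtain ⟨m, a₀, ha₀⟩ := LaurentPolynomial.exists_T_pow a
  obtain ⟨n, b₀, hb₀⟩ := LaurentPolynomial.exists_T_pow b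
  have hbzero : b = 0 := by
    by_contra hb
    have hb₀0 : b₀ ≠ 0 := by
      intro h0
      apply hb
      apply unit_cancel (k := (n:ℤ))
      rw [← hb₀, h0, map_zero]
    have lhs : Polynomial.toLaurent (a₀^2 * Polynomial.X ^ (2*n+E))
        = b^2 * cL θ p * T (2*(m:ℤ)+2*(n:ℤ)+(E:ℤ)) := by
      rw [map_mul, map_pow, ha₀, Polynomial.toLaurent_X_pow, mul_pow, h, T_pow]
      calc b ^ 2 * cL θ p * T (2 * (m:ℤ)) * T (((2*n+E : ℕ)) : ℤ)
          = b ^ 2 * cL θ p * (T (2 * (m:ℤ)) * T (((2*n+E : ℕ)) : ℤ)) := by ring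
      _ = b^2 * cL θ p * T (2*(m:ℤ)+2*(n:ℤ)+(E:ℤ)) := by
          rw [← T_add]
          congr 1
          push_cast
          ring
    have rhs : Polynomial.toLaurent (b₀^2
          * (Polynomial.C u * Polynomial.X ^ N + Polynomial.C v * Polynomial.X ^ 0)
          * Polynomial.X ^ (2*m))
        = b^2 * cL θ p * T (2*(m:ℤ)+2*(n:ℤ)+(E:ℤ)) := by
      rw [map_mul, map_mul, map_pow, hb₀, ← hc, Polynomial.toLaurent_X_pow, mul_pow, T_pow]
      calc b ^ 2 * T (2 * (n:ℤ)) * (cL θ p * T (E:ℤ)) * T (((2*m : ℕ)) : ℤ)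
          = b ^ 2 * cL θ p * (T (2 * (n:ℤ)) * T (E:ℤ) * T (((2*m : ℕ)) : ℤ)) := by ring
      _ = b^2 * cL θ p * T (2*(m:ℤ)+2*(n:ℤ)+(E:ℤ)) := by
          rw [← T_add, ← T_add]
          congr 1
          push_cast
          ring
    have heq := (Polynomial.toLaurent_inj _ _).mp (lhs.trans rhs.symm)
    exact not_square hu hv hN hb₀0 _ _ heq
  have hazero : a = 0 := by
    have h1 : a ^ 2 = 0 := by rw [h, hbzero]; ring
    have h2 : Polynomial.toLaurent (a₀ ^ 2) = 0 := by
      rw [map_pow, ha₀, mul_pow, h1, zero_mul]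
    have h3 : a₀ ^ 2 = 0 := by
      rw [← Polynomial.toLaurent_inj (a₀^2) 0, h2, map_zero]
    have h4 : a₀ = 0 := pow_eq_zero_iff two_ne_zero |>.mp h3
    apply unit_cancel (k := (m:ℤ))
    rw [← ha₀, h4, map_zero]
  exact ⟨hazero, hbzero⟩

lemma exists_poly_in_I (hθ : θ ≠ 0) (hp : p ≠ 0) {I : Ideal (Aqt θ p)} (hI0 : I ≠ ⊥) :
    ∃ f : ℂ[X], f ≠ 0 ∧ Φ θ p f ∈ I := by
  obtain ⟨e, heI, he0⟩ := Submodule.exists_mem_ne_zero_of_ne_bot hI0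
  obtain ⟨q, hq⟩ := Ideal.Quotient.mk_surjective e
  set r : Rng := q %ₘ relP θ p with hrdef
  have hrel0 : Ideal.Quotient.mk (relIdeal θ p) (relP θ p) = 0 := by
    rw [Ideal.Quotient.eq_zero_iff_mem, relIdeal_eq]
    exact Ideal.subset_span rfl
  have hmkr : Ideal.Quotient.mk (relIdeal θ p) r = e := by
    have hdiv := modByMonic_add_div q (relP θ p)
    have h5 : Ideal.Quotient.mk (relIdeal θ p) r
        + Ideal.Quotient.mk (relIdeal θ p) (relP θ p)
          * Ideal.Quotient.mk (relIdeal θ p) (q /ₘ relP θ p)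
        = Ideal.Quotient.mk (relIdeal θ p) q := by
      rw [← map_mul, ← map_add, hdiv]
    rw [hrel0, hq] at h5
    linear_combination h5
  have hr0 : r ≠ 0 := fun h => he0 (by rw [← hmkr, h, map_zero])
  have hdeg2 : r.degree < 2 := by
    have h6 := degree_modByMonic_lt q (relP_monic θ p)
    rw [relP, degree_X_pow_sub_C (by norm_num)] at h6
    exact_mod_cast h6
  have hdeg1 : r.degree ≤ 1 := by
    rcases hd : r.degree with _ | n
    · exact bot_le
    · rw [hd] at hdeg2
      have h' : (n : WithBot ℕ) < 2 := hdeg2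
      have h8 : n < 2 := by exact_mod_cast h'
      have h9 : n ≤ 1 := by omega
      show (n : WithBot ℕ) ≤ 1
      exact_mod_cast h9
  have hrr : r = Polynomial.C (r.coeff 1) * Polynomial.X + Polynomial.C (r.coeff 0) :=
    eq_X_add_C_of_degree_le_one hdeg1
  set a' : LaurentPolynomial ℂ := r.coeff 0 with ha'
  set b' : LaurentPolynomial ℂ := r.coeff 1 with hb'
  have hmk2 : Ideal.Quotient.mk (relIdeal θ p) r = ψ θ p b' * xx θ p + ψ θ p a' := by
    conv_lhs => rw [hrr]
    rw [map_add, map_mul]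
    rfl
  have hprod : e * (ψ θ p a' - ψ θ p b' * xx θ p) = ψ θ p (a'^2 - b'^2 * cL θ p) := by
    rw [← hmkr, hmk2, map_sub, map_pow, map_mul, map_pow]
    linear_combination (-(ψ θ p b' ^ 2)) * (xx_sq θ p)
  have hIw : ψ θ p (a'^2 - b'^2 * cL θ p) ∈ I := by
    rw [← hprod, mul_comm e]; exact I.mul_mem_left _ heI
  have hw0 : a'^2 - b'^2 * cL θ p ≠ 0 := by
    intro h0
    have h1 : a'^2 = b'^2 * cL θ p := by linear_combination h0
    obtain ⟨ha0, hb0⟩ := not_square_laurent hθ hp h1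
    apply hr0
    rw [hrr, ha0, hb0]
    simp
  obtain ⟨k, w₀, hw₀⟩ := LaurentPolynomial.exists_T_pow (a'^2 - b'^2 * cL θ p)
  refine ⟨w₀, ?_, ?_⟩
  · intro h0
    apply hw0
    apply unit_cancel (k := (k:ℤ))
    rw [← hw₀, h0, map_zero]
  · have h7 : Φ θ p w₀ = ψ θ p (a'^2 - b'^2 * cL θ p) * t θ p k := by
      rw [Φ, RingHom.comp_apply, hw₀, map_mul]
      rfl
    rw [h7, mul_comm _ (t θ p k)]
    exact I.mul_mem_left _ hIw

lemma eq_monomial {g : ℂ[X]} (hg0 : g ≠ 0)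
    (h : ∀ lam : ℂ, lam ≠ 0 → ¬ g.IsRoot lam) :
    ∃ (l : ℂ) (d : ℕ), l ≠ 0 ∧ g = Polynomial.C l * Polynomial.X ^ d := by
  have hX : (Polynomial.X - Polynomial.C (0:ℂ)) = Polynomial.X := by simp
  have hgv := pow_mul_divByMonic_rootMultiplicity_eq g (0:ℂ)
  have hv0 := eval_divByMonic_pow_rootMultiplicity_ne_zero (0:ℂ) hg0
  rw [hX] at hgv hv0
  set v : ℂ[X] := g /ₘ Polynomial.X ^ rootMultiplicity 0 g with hv
  have hvd : v.degree ≤ 0 := by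
    by_contra hcon
    push_neg at hcon
    obtain ⟨lam, hlam⟩ := Complex.exists_root hcon
    have hlam0 : lam ≠ 0 := by
      intro h0
      rw [h0] at hlam
      exact hv0 hlam
    apply h lam hlam0
    rw [Polynomial.IsRoot, ← hgv, eval_mul, hlam, mul_zero]
  set l : ℂ := v.coeff 0 with hldef
  have hvc : v = Polynomial.C l := eq_C_of_degree_le_zero hvd
  refine ⟨l, rootMultiplicity 0 g, ?_, ?_⟩
  · intro h0
    apply hv0
    rw [hvc, h0, eval_C]
  · conv_lhs => rw [← hgv, hvc]
    ring

theorem main (hθ : θ ≠ 0) (hp : p ≠ 0)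
    (hDy : D (t θ p 1) = xx θ p) (hDx : D (xx θ p) = ψ θ p (dxL θ p))
    (I : Ideal (Aqt θ p)) (hI : ∀ a ∈ I, D a ∈ I) :
    I = ⊥ ∨ I = ⊤ := by
  by_cases hbot : I = ⊥
  · exact Or.inl hbot
  right
  obtain ⟨f0, hf00, hf0I⟩ := exists_poly_in_I hθ hp hbot
  set J : Ideal ℂ[X] := I.comap (Φ θ p) with hJ
  have hJ0 : J ≠ ⊥ := by
    intro h
    apply hf00
    have : f0 ∈ J := Ideal.mem_comap.mpr hf0I
    rwa [h, Ideal.mem_bot] at this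
  set g : ℂ[X] := Submodule.IsPrincipal.generator J with hgdef
  have hgJ : g ∈ J := Submodule.IsPrincipal.generator_mem J
  have hgdvd : ∀ h ∈ J, g ∣ h := fun h hh =>
    (Submodule.IsPrincipal.mem_iff_generator_dvd J).mp hh
  have hg0 : g ≠ 0 := by
    intro h
    apply hJ0
    rw [← Ideal.span_singleton_generator J, ← hgdef, h, Ideal.span_singleton_eq_bot]
  have hgI : Φ θ p g ∈ I := Ideal.mem_comap.mp hgJ
  have hu1 := closure1 D hDy hDx hI hgI
  have hu2 := closure2 D hDy hDx hI hgI
  have hd1 : g ∣ c1 θ p * derivative g := by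
    have h1 : g ∣ Polynomial.C ((p:ℂ)*θ) * Polynomial.X ^ (Ae p) * g
        + c1 θ p * derivative g := hgdvd _ (Ideal.mem_comap.mpr hu1)
    have h2 : g ∣ Polynomial.C ((p:ℂ)*θ) * Polynomial.X ^ (Ae p) * g :=
      Dvd.intro_left _ rfl
    exact (dvd_add_right h2).mp h1
  have hd2 : g ∣ c1 θ p * derivative (derivative g)
      + Polynomial.C ((p:ℂ)*θ) * Polynomial.X ^ (Ae p) * derivative g :=
    hgdvd _ (Ideal.mem_comap.mpr hu2)
  have hP : ((p:ℤ):ℂ) ≠ 0 := Int.cast_ne_zero.mpr hp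
  have hab : ((Ae p : ℕ) : ℂ) + 1 - ((Be p : ℕ) : ℂ) = 2 * ((p:ℤ):ℂ) := by
    have h3 : ((Ae p : ℕ) : ℤ) + 1 - ((Be p : ℕ) : ℤ) = 2 * p := by
      unfold Ae Be
      omega
    have h4 := congrArg (fun z : ℤ => (z : ℂ)) h3
    push_cast at h4 ⊢
    linear_combination h4
  have hroot : ∀ lam : ℂ, lam ≠ 0 → ¬ g.IsRoot lam := by
    intro lam hl hr
    exact no_nonzero_root hθ hP hab hg0 (by rwa [c1] at hd1) (by rwa [c1] at hd2) hl hr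
  obtain ⟨l, d, hl0, hld⟩ := eq_monomial hg0 hroot
  have hXd : (Polynomial.X : ℂ[X]) ^ d ∈ J := by
    have h5 : Polynomial.C l⁻¹ * g ∈ J := J.mul_mem_left _ hgJ
    have h6 : Polynomial.C l⁻¹ * g = Polynomial.X ^ d := by
      rw [hld, ← mul_assoc, ← map_mul, inv_mul_cancel₀ hl0, map_one, one_mul]
    rwa [h6] at h5
  have htd : Φ θ p (Polynomial.X ^ d) = t θ p d := by
    rw [Φ, RingHom.comp_apply, Polynomial.toLaurent_X_pow]
    rfl
  have hmem : t θ p d ∈ I := by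
    rw [← htd]
    exact Ideal.mem_comap.mp hXd
  exact Ideal.eq_top_of_isUnit_mem I hmem (isUnit_t θ p d)

end

end Stmt6Aux

/-- For `θ ∈ ℂ*`, `p ∈ ℤ*`, the algebra
`A = ℂ[x, y, y⁻¹]/(x² - θy^{2p} - 1)` with the derivation `D` determined by
`D(y) = x`, `D(x) = pθy^{2p-1}` has no nonzero proper `D`-invariant ideal. -/
theorem stmt_6 (θ : ℂ) (hθ : θ ≠ 0) (p : ℤ) (hp : p ≠ 0)
    (D : Derivation ℂ (Aqt θ p) (Aqt θ p))
    (hDy : D (Ideal.Quotient.mk (relIdeal θ p) (Polynomial.C (LaurentPolynomial.T 1))) =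
      Ideal.Quotient.mk (relIdeal θ p) Polynomial.X)
    (hDx : D (Ideal.Quotient.mk (relIdeal θ p) Polynomial.X) =
      Ideal.Quotient.mk (relIdeal θ p)
        (Polynomial.C (LaurentPolynomial.C ((p : ℂ) * θ) * LaurentPolynomial.T (2 * p - 1))))
    (I : Ideal (Aqt θ p)) (hI : ∀ a ∈ I, D a ∈ I) :
    I = ⊥ ∨ I = ⊤ := by
  have hDy' : D (Stmt6Aux.t θ p 1) = Stmt6Aux.xx θ p := hDy
  have hDx' : D (Stmt6Aux.xx θ p) = Stmt6Aux.ψ θ p (Stmt6Aux.dxL θ p) := hDx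
  exact Stmt6Aux.main D hθ hp hDy' hDx' I hI
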